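/- Let p be an odd prime with (5/p) = 1 and q = p^n. The number of points (x:y:u, z:w) in (P^2 × P^1)(F_q) on the surface defined by u^2 z^4 - x y z^3 w + (x^2+y^2-3u^2) z^2 w^2 - x y z w^3 + u^2 w^4 = 0 equals q^2 + 8q + 1. -/

import Mathlib

attribute [local instance] Classical.propDecidable

section aux
variable {F : Type} [Field F] [Fintype F]

/-- generic sum splitting helper -/
lemma sum_univ_split {α : Type*} [Fintype α] (a : α) (f : α → ℕ) (m : ℕ)
    (h : ∀ x, x ≠ a → f x = m) :
    ∑ x, f x = f a + (Fintype.card α - 1) * m := by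
  rw [← Finset.add_sum_erase _ f (Finset.mem_univ a)]
  congr 1
  rw [Finset.sum_congr rfl (fun x hx => h x (Finset.mem_erase.1 hx).1), Finset.sum_const,
    Finset.card_erase_of_mem (Finset.mem_univ a), Finset.card_univ, smul_eq_mul]

lemma card_prod_subtype {α β : Type*} [Fintype α] [Fintype β] (p : α → β → Prop) :
    Nat.card {x : α × β // p x.1 x.2} = ∑ a, Nat.card {b : β // p a b} := by
  rw [Nat.card_eq_fintype_card, Fintype.card_congr (Equiv.subtypeProdEquivSigmaSubtype p),
    Fintype.card_sigma]
  exact Finset.sum_congr rfl (fun a _ => (Nat.card_eq_fintype_card).symm)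

lemma card_solmul (c : F) :
    Nat.card {x : F × F // x.1 * x.2 = c}
      = if c = 0 then 2 * Fintype.card F - 1 else Fintype.card F - 1 := by
  have hq : 1 ≤ Fintype.card F := Fintype.card_pos
  rw [card_prod_subtype (fun a b : F => a * b = c)]
  simp only [Nat.card_eq_fintype_card]
  by_cases hc : c = 0
  · subst hc
    rw [sum_univ_split (0:F) _ 1 ?h]
    · have : Fintype.card {b : F // (0:F) * b = 0} = Fintype.card F := by
        apply Fintype.card_congr
        apply Equiv.subtypeUnivEquiv
        intro b; rw [zero_mul]
      rw [this, if_pos rfl]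
      omega
    · intro x hx
      have : ∀ b : F, (x * b = 0) ↔ (b = 0) := by
        intro b; rw [mul_eq_zero]; simp [hx]
      rw [Fintype.card_congr (Equiv.subtypeEquivRight this), Fintype.card_subtype_eq]
  · rw [sum_univ_split (0:F) _ 1 ?h2]
    · have : Fintype.card {b : F // (0:F) * b = c} = 0 := by
        rw [Fintype.card_eq_zero_iff]
        exact ⟨fun x => hc (by rw [← x.2, zero_mul])⟩
      rw [this, if_neg hc, zero_add, mul_one]
    · intro x hx
      have : ∀ b : F, (x * b = c) ↔ (b = x⁻¹ * c) := by
        intro b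
        constructor
        · intro h; rw [← h]; field_simp
        · intro h; rw [h]; field_simp
      rw [Fintype.card_congr (Equiv.subtypeEquivRight this), Fintype.card_subtype_eq]

/-- model count: the affine cone over the conic (or line pair) -/
lemma card_modelA (e : F) :
    Nat.card {x : F × F × F // x.2.1 * x.2.2 = e * x.1 ^ 2}
      = if e = 0 then 2 * Fintype.card F ^ 2 - Fintype.card F else Fintype.card F ^ 2 := by
  have hq : 1 ≤ Fintype.card F := Fintype.card_pos
  obtain ⟨m, hm⟩ : ∃ m, Fintype.card F = m + 1 := ⟨Fintype.card F - 1, by omega⟩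
  rw [card_prod_subtype (fun a (b : F × F) => b.1 * b.2 = e * a ^ 2)]
  have key : ∀ a : F, Nat.card {b : F × F // b.1 * b.2 = e * a ^ 2}
      = if e * a ^ 2 = 0 then 2 * Fintype.card F - 1 else Fintype.card F - 1 :=
    fun a => card_solmul (e * a ^ 2)
  by_cases he : e = 0
  · subst he
    rw [if_pos rfl]
    rw [Finset.sum_congr rfl (fun a _ => by rw [key a, if_pos (by rw [zero_mul])])]
    rw [Finset.sum_const, Finset.card_univ, smul_eq_mul, hm]
    zify [show 1 ≤ 2*(m+1) by omega, show (m+1) ≤ 2*(m+1)^2 by nlinarith]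
    ring
  · rw [if_neg he]
    rw [sum_univ_split (0:F) _ (Fintype.card F - 1) ?hh]
    · rw [key 0, if_pos (by ring), hm]
      zify [show 1 ≤ 2*(m+1) by omega, show 1 ≤ m+1 by omega]
      ring
    · intro x hx
      rw [key x, if_neg (by simp [he, pow_eq_zero_iff, hx])]



variable {F : Type} [Field F] [Fintype F]

def e3 : (Fin 3 → F) ≃ F × F × F where
  toFun v := (v 0, v 1, v 2)
  invFun x := ![x.1, x.2.1, x.2.2]
  left_inv v := by funext i; fin_cases i <;> rfl
  right_inv x := rfl

def e2s : (Fin 2 → F) ≃ F × F where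
  toFun v := (v 1, v 0)
  invFun x := ![x.2, x.1]
  left_inv v := by funext i; fin_cases i <;> rfl
  right_inv x := rfl

def linXY (a b c d : F) (h : a * d - b * c ≠ 0) : F × F × F ≃ F × F × F where
  toFun x := (x.2.2, (a * x.1 + b * x.2.1, c * x.1 + d * x.2.1))
  invFun y := ((d * y.2.1 - b * y.2.2) / (a * d - b * c),
    (a * y.2.2 - c * y.2.1) / (a * d - b * c), y.1)
  left_inv x := by
    obtain ⟨x1, x2, x3⟩ := x
    simp only [Prod.mk.injEq]
    refine ⟨?_, ?_, trivial⟩ <;> (simp only [← add_div, mul_div_assoc', div_eq_iff h]; ring)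
  right_inv y := by
    obtain ⟨y1, y2, y3⟩ := y
    simp only [Prod.mk.injEq]
    refine ⟨trivial, ?_, ?_⟩ <;> (simp only [← add_div, mul_div_assoc', div_eq_iff h]; ring)

def shear (ε : F) (h2 : (2 : F) ≠ 0) : F × F × F ≃ F × F × F where
  toFun x := (x.2.1, (x.1 - ε * x.2.1 - x.2.2, x.1 - ε * x.2.1 + x.2.2))
  invFun y := (ε * y.1 + (y.2.1 + y.2.2) / 2, y.1, (y.2.2 - y.2.1) / 2)
  left_inv x := by
    obtain ⟨x1, x2, x3⟩ := x
    simp only [Prod.mk.injEq]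
    refine ⟨?_, trivial, ?_⟩ <;> (field_simp; ring)
  right_inv y := by
    obtain ⟨y1, y2, y3⟩ := y
    simp only [Prod.mk.injEq]
    refine ⟨trivial, ?_, ?_⟩ <;> (field_simp; ring)

lemma card_plane : Nat.card {x : F × F × F // x.2.2 = 0} = Fintype.card F ^ 2 := by
  rw [Nat.card_eq_fintype_card]
  have e : {x : F × F × F // x.2.2 = 0} ≃ F × F :=
    { toFun := fun x => (x.1.1, x.1.2.1)
      invFun := fun p => ⟨(p.1, p.2, 0), rfl⟩
      left_inv := fun x => by
        obtain ⟨⟨a, b, c⟩, hc⟩ := x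
        simp only at hc
        subst hc
        rfl
      right_inv := fun p => rfl }
  rw [Fintype.card_congr e, Fintype.card_prod]; ring



def Eq5 (v : Fin 3 → F) (u : Fin 2 → F) : F :=
  v 2 ^ 2 * u 0 ^ 4 - v 0 * v 1 * u 0 ^ 3 * u 1
    + (v 0 ^ 2 + v 1 ^ 2 - 3 * v 2 ^ 2) * u 0 ^ 2 * u 1 ^ 2
    - v 0 * v 1 * u 0 * u 1 ^ 3 + v 2 ^ 2 * u 1 ^ 4

def Deg (u : Fin 2 → F) : Prop :=
  u 0 ≠ 0 ∧ u 1 ≠ 0 ∧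
    (u 0 ^ 2 - u 1 ^ 2) * (u 0 ^ 4 - 3 * u 0 ^ 2 * u 1 ^ 2 + u 1 ^ 4) = 0

lemma card_fiber (h2 : (2 : F) ≠ 0) (u : Fin 2 → F) (hu : u ≠ 0) :
    Nat.card {v : Fin 3 → F // Eq5 v u = 0}
      = if Deg u then 2 * Fintype.card F ^ 2 - Fintype.card F else Fintype.card F ^ 2 := by
  have hzw : ¬(u 0 = 0 ∧ u 1 = 0) := by
    rintro ⟨hz, hw⟩; apply hu; funext i; fin_cases i <;> assumption
  have htrans : Nat.card {v : Fin 3 → F // Eq5 v u = 0}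
      = Nat.card {x : F × F × F //
          x.2.2 ^ 2 * u 0 ^ 4 - x.1 * x.2.1 * u 0 ^ 3 * u 1
            + (x.1 ^ 2 + x.2.1 ^ 2 - 3 * x.2.2 ^ 2) * u 0 ^ 2 * u 1 ^ 2
            - x.1 * x.2.1 * u 0 * u 1 ^ 3 + x.2.2 ^ 2 * u 1 ^ 4 = 0} :=
    Nat.card_congr (e3.subtypeEquiv (fun v => Iff.rfl))
  rw [htrans]
  by_cases hw : u 1 = 0
  · have hz : u 0 ≠ 0 := fun h => hzw ⟨h, hw⟩
    rw [if_neg (fun hD => hD.2.1 hw)]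
    have hiff : ∀ x : F × F × F,
        (x.2.2 ^ 2 * u 0 ^ 4 - x.1 * x.2.1 * u 0 ^ 3 * u 1
          + (x.1 ^ 2 + x.2.1 ^ 2 - 3 * x.2.2 ^ 2) * u 0 ^ 2 * u 1 ^ 2
          - x.1 * x.2.1 * u 0 * u 1 ^ 3 + x.2.2 ^ 2 * u 1 ^ 4 = 0) ↔ x.2.2 = 0 := by
      intro x
      constructor
      · intro h
        have h' : x.2.2 ^ 2 * u 0 ^ 4 = 0 := by
          rw [hw] at h; linear_combination h
        have := (mul_eq_zero.mp h').resolve_right (pow_ne_zero _ hz)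
        exact pow_eq_zero_iff (n := 2) (by norm_num) |>.mp this
      · intro h; rw [h, hw]; ring
    rw [Nat.card_congr (Equiv.subtypeEquivRight hiff), card_plane]
  · by_cases hz : u 0 = 0
    · rw [if_neg (fun hD => hD.1 hz)]
      have hiff : ∀ x : F × F × F,
          (x.2.2 ^ 2 * u 0 ^ 4 - x.1 * x.2.1 * u 0 ^ 3 * u 1
            + (x.1 ^ 2 + x.2.1 ^ 2 - 3 * x.2.2 ^ 2) * u 0 ^ 2 * u 1 ^ 2
            - x.1 * x.2.1 * u 0 * u 1 ^ 3 + x.2.2 ^ 2 * u 1 ^ 4 = 0) ↔ x.2.2 = 0 := by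
        intro x
        constructor
        · intro h
          have h' : x.2.2 ^ 2 * u 1 ^ 4 = 0 := by
            rw [hz] at h; linear_combination h
          have := (mul_eq_zero.mp h').resolve_right (pow_ne_zero _ hw)
          exact pow_eq_zero_iff (n := 2) (by norm_num) |>.mp this
        · intro h; rw [h, hz]; ring
      rw [Nat.card_congr (Equiv.subtypeEquivRight hiff), card_plane]
    · by_cases hd : u 0 ^ 2 - u 1 ^ 2 = 0
      · -- z = ±w : two planes
        rw [if_pos ⟨hz, hw, by rw [hd, zero_mul]⟩]
        have hfac : (u 0 - u 1) * (u 0 + u 1) = 0 := by linear_combination hd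
        have hcase : u 0 = u 1 ∨ u 0 = -u 1 := by
          rcases mul_eq_zero.mp hfac with h | h
          · exact Or.inl (sub_eq_zero.mp h)
          · exact Or.inr (eq_neg_of_add_eq_zero_left h)
        rcases hcase with hc | hc
        · have hiff : ∀ x : F × F × F,
              (x.2.2 ^ 2 * u 0 ^ 4 - x.1 * x.2.1 * u 0 ^ 3 * u 1
                + (x.1 ^ 2 + x.2.1 ^ 2 - 3 * x.2.2 ^ 2) * u 0 ^ 2 * u 1 ^ 2
                - x.1 * x.2.1 * u 0 * u 1 ^ 3 + x.2.2 ^ 2 * u 1 ^ 4 = 0) ↔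
              (((shear 1 h2) x).2.1 * ((shear 1 h2) x).2.2
                = 0 * ((shear 1 h2) x).1 ^ 2) := by
            intro x
            simp only [shear, Equiv.coe_fn_mk, zero_mul, one_mul]
            rw [hc]
            constructor
            · intro h
              have h' : u 1 ^ 4 * ((x.1 - x.2.1 - x.2.2) * (x.1 - x.2.1 + x.2.2)) = 0 := by
                linear_combination h
              exact (mul_eq_zero.mp h').resolve_left (pow_ne_zero _ hw)
            · intro h; linear_combination u 1 ^ 4 * h
          rw [Nat.card_congr ((shear 1 h2).subtypeEquiv
            (q := fun y => y.2.1 * y.2.2 = 0 * y.1 ^ 2) hiff), card_modelA, if_pos rfl]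
        · have hiff : ∀ x : F × F × F,
              (x.2.2 ^ 2 * u 0 ^ 4 - x.1 * x.2.1 * u 0 ^ 3 * u 1
                + (x.1 ^ 2 + x.2.1 ^ 2 - 3 * x.2.2 ^ 2) * u 0 ^ 2 * u 1 ^ 2
                - x.1 * x.2.1 * u 0 * u 1 ^ 3 + x.2.2 ^ 2 * u 1 ^ 4 = 0) ↔
              (((shear (-1) h2) x).2.1 * ((shear (-1) h2) x).2.2
                = 0 * ((shear (-1) h2) x).1 ^ 2) := by
            intro x
            simp only [shear, Equiv.coe_fn_mk, zero_mul, neg_one_mul, sub_neg_eq_add]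
            rw [hc]
            constructor
            · intro h
              have h' : u 1 ^ 4 * ((x.1 + x.2.1 - x.2.2) * (x.1 + x.2.1 + x.2.2)) = 0 := by
                linear_combination h
              exact (mul_eq_zero.mp h').resolve_left (pow_ne_zero _ hw)
            · intro h; linear_combination u 1 ^ 4 * h
          rw [Nat.card_congr ((shear (-1) h2).subtypeEquiv
            (q := fun y => y.2.1 * y.2.2 = 0 * y.1 ^ 2) hiff), card_modelA, if_pos rfl]
      · -- generic fiber
        have hdet : u 0 * -u 0 - -u 1 * u 1 ≠ 0 := by
          intro h; apply hd; linear_combination -h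
        set ψ := linXY (u 0) (-u 1) (u 1) (-u 0) hdet with hψ
        set e : F := -(u 0 ^ 4 - 3 * u 0 ^ 2 * u 1 ^ 2 + u 1 ^ 4) / (u 0 * u 1) with he
        have hiff : ∀ x : F × F × F,
            (x.2.2 ^ 2 * u 0 ^ 4 - x.1 * x.2.1 * u 0 ^ 3 * u 1
              + (x.1 ^ 2 + x.2.1 ^ 2 - 3 * x.2.2 ^ 2) * u 0 ^ 2 * u 1 ^ 2
              - x.1 * x.2.1 * u 0 * u 1 ^ 3 + x.2.2 ^ 2 * u 1 ^ 4 = 0) ↔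
            ((ψ x).2.1 * (ψ x).2.2 = e * (ψ x).1 ^ 2) := by
          intro x
          rw [hψ, he]
          simp only [linXY, Equiv.coe_fn_mk]
          rw [div_mul_eq_mul_div, eq_div_iff (mul_ne_zero hz hw)]
          constructor
          · intro h; linear_combination h
          · intro h; linear_combination h
        rw [Nat.card_congr (ψ.subtypeEquiv
          (q := fun y => y.2.1 * y.2.2 = e * y.1 ^ 2) hiff), card_modelA]
        have hcond : (e = 0) ↔ Deg u := by
          rw [he]
          constructor
          · intro h
            refine ⟨hz, hw, ?_⟩
            rcases div_eq_zero_iff.mp h with h' | h'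
            · rw [neg_eq_zero.mp h', mul_zero]
            · exact absurd h' (mul_ne_zero hz hw)
          · rintro ⟨-, -, hM⟩
            have : u 0 ^ 4 - 3 * u 0 ^ 2 * u 1 ^ 2 + u 1 ^ 4 = 0 :=
              (mul_eq_zero.mp hM).resolve_left hd
            rw [this, neg_zero, zero_div]
        rw [if_congr hcond rfl rfl]

lemma card_deg (φ : F) (hφ : φ * φ = φ + 1) (h2 : (2:F) ≠ 0) (h5 : (5:F) ≠ 0) :
    Nat.card {u : Fin 2 → F // Deg u} = 6 * (Fintype.card F - 1) := by
  -- pairwise distinctness of the six slopes 1, -1, φ, 1-φ, φ-1, -φ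
  have n12 : (1:F) ≠ -1 := fun h => h2 (by linear_combination h)
  have n13 : (1:F) ≠ φ := fun h => one_ne_zero (α := F) (by linear_combination (-φ)*h - hφ)
  have n14 : (1:F) ≠ 1-φ := fun h => one_ne_zero (α := F) (by linear_combination (-1+φ)*h - hφ)
  have n15 : (1:F) ≠ φ-1 := fun h => one_ne_zero (α := F) (by linear_combination (1+φ)*h + hφ)
  have n16 : (1:F) ≠ -φ := fun h => one_ne_zero (α := F) (by linear_combination (2-φ)*h + hφ)
  have n23 : (-1:F) ≠ φ := fun h => one_ne_zero (α := F) (by linear_combination (-2+φ)*h + hφ)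
  have n24 : (-1:F) ≠ 1-φ := fun h => one_ne_zero (α := F) (by linear_combination (-1-φ)*h + hφ)
  have n25 : (-1:F) ≠ φ-1 := fun h => one_ne_zero (α := F) (by linear_combination (1-φ)*h - hφ)
  have n26 : (-1:F) ≠ -φ := fun h => one_ne_zero (α := F) (by linear_combination φ*h - hφ)
  have n34 : φ ≠ 1-φ := fun h => h5 (by linear_combination (-1+2*φ)*h - 4*hφ)
  have n35 : φ ≠ φ-1 := fun h => one_ne_zero (α := F) (by linear_combination h)
  have n36 : φ ≠ -φ := fun h => h2 (by linear_combination (-1+φ)*h - 2*hφ)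
  have n45 : (1-φ:F) ≠ φ-1 := fun h => h2 (by linear_combination (-φ)*h - 2*hφ)
  have n46 : (1-φ:F) ≠ -φ := fun h => one_ne_zero (α := F) (by linear_combination h)
  have n56 : (φ-1:F) ≠ -φ := fun h => h5 (by linear_combination (-1+2*φ)*h - 4*hφ)
  have nz3 : φ ≠ 0 := fun h => one_ne_zero (α := F) (by linear_combination (-1+φ)*h - hφ)
  have nz4 : (1-φ:F) ≠ 0 := fun h => one_ne_zero (α := F) (by linear_combination (-φ)*h - hφ)
  have nz5 : (φ-1:F) ≠ 0 := fun h => one_ne_zero (α := F) (by linear_combination φ*h - hφ)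
  have nz6 : (-φ:F) ≠ 0 := fun h => one_ne_zero (α := F) (by linear_combination (1-φ)*h - hφ)
  have hfact : ∀ z w : F, (z^2 - w^2) * (z^4 - 3*z^2*w^2 + w^4)
      = (z - w) * (z + w) * (z - φ*w) * (z - (1-φ)*w) * (z - (φ-1)*w) * (z - (-φ)*w) := by
    intro z w
    linear_combination (w^6 - w^6*φ + w^6*φ^2 - 3*z^2*w^4 + z^2*w^4*φ - z^2*w^4*φ^2
      + 2*z^4*w^2) * hφ
  have key : ∀ w : F, w ≠ 0 → ∀ z : F,
      (z ≠ 0 ∧ w ≠ 0 ∧ (z^2 - w^2) * (z^4 - 3*z^2*w^2 + w^4) = 0)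
        ↔ (z = 1*w ∨ z = -1*w ∨ z = φ*w ∨ z = (1-φ)*w ∨ z = (φ-1)*w ∨ z = -φ*w) := by
    intro w hw z
    constructor
    · rintro ⟨hz, -, hprod⟩
      rw [hfact] at hprod
      have sub_iff : ∀ s t : F, s - t = 0 → s = t := fun s t h => sub_eq_zero.mp h
      rcases mul_eq_zero.mp hprod with h | h
      · rcases mul_eq_zero.mp h with h | h
        · rcases mul_eq_zero.mp h with h | h
          · rcases mul_eq_zero.mp h with h | h
            · rcases mul_eq_zero.mp h with h | h
              · exact Or.inl (by rw [one_mul]; exact sub_eq_zero.mp h)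
              · exact Or.inr (Or.inl (by rw [neg_one_mul]; exact eq_neg_of_add_eq_zero_left h))
            · exact Or.inr (Or.inr (Or.inl (sub_eq_zero.mp h)))
          · exact Or.inr (Or.inr (Or.inr (Or.inl (sub_eq_zero.mp h))))
        · exact Or.inr (Or.inr (Or.inr (Or.inr (Or.inl (sub_eq_zero.mp h)))))
      · exact Or.inr (Or.inr (Or.inr (Or.inr (Or.inr (by
          rw [show -φ*w = -(φ*w) by ring]
          have := sub_eq_zero.mp h
          rw [this]; ring)))))
    · rintro (h|h|h|h|h|h)
      · exact ⟨by rw [h]; exact mul_ne_zero one_ne_zero hw, hw, by rw [hfact, h]; ring⟩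
      · exact ⟨by rw [h]; exact mul_ne_zero (neg_ne_zero.mpr one_ne_zero) hw, hw,
          by rw [hfact, h]; ring⟩
      · exact ⟨by rw [h]; exact mul_ne_zero nz3 hw, hw, by rw [hfact, h]; ring⟩
      · exact ⟨by rw [h]; exact mul_ne_zero nz4 hw, hw, by rw [hfact, h]; ring⟩
      · exact ⟨by rw [h]; exact mul_ne_zero nz5 hw, hw, by rw [hfact, h]; ring⟩
      · exact ⟨by rw [h]; exact mul_ne_zero (neg_ne_zero.mpr nz3) hw, hw,
          by rw [hfact, h]; ring⟩
  have hcard6 : ∀ w : F, w ≠ 0 →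
      Nat.card {z : F // z ≠ 0 ∧ w ≠ 0 ∧ (z^2 - w^2) * (z^4 - 3*z^2*w^2 + w^4) = 0} = 6 := by
    intro w hw
    rw [Nat.card_eq_fintype_card, Fintype.card_subtype]
    have himg : (Finset.univ.filter
          (fun z : F => z ≠ 0 ∧ w ≠ 0 ∧ (z^2 - w^2) * (z^4 - 3*z^2*w^2 + w^4) = 0))
        = ({1, -1, φ, 1-φ, φ-1, -φ} : Finset F).image (· * w) := by
      ext z
      simp only [Finset.mem_filter, Finset.mem_univ, true_and, Finset.mem_image,
        Finset.mem_insert, Finset.mem_singleton]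
      rw [key w hw z]
      constructor
      · rintro (h|h|h|h|h|h)
        · exact ⟨1, by tauto, h.symm⟩
        · exact ⟨-1, by tauto, h.symm⟩
        · exact ⟨φ, by tauto, h.symm⟩
        · exact ⟨1-φ, by tauto, h.symm⟩
        · exact ⟨φ-1, by tauto, h.symm⟩
        · exact ⟨-φ, by tauto, h.symm⟩
      · rintro ⟨e, he, rfl⟩
        rcases he with rfl|rfl|rfl|rfl|rfl|rfl
        · exact Or.inl rfl
        · exact Or.inr (Or.inl rfl)
        · exact Or.inr (Or.inr (Or.inl rfl))
        · exact Or.inr (Or.inr (Or.inr (Or.inl rfl)))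
        · exact Or.inr (Or.inr (Or.inr (Or.inr (Or.inl rfl))))
        · exact Or.inr (Or.inr (Or.inr (Or.inr (Or.inr rfl))))
    rw [himg, Finset.card_image_of_injective _ (mul_left_injective₀ hw)]
    rw [Finset.card_insert_of_notMem (by
        simp only [Finset.mem_insert, Finset.mem_singleton]
        push_neg
        exact ⟨n12, n13, n14, n15, n16⟩)]
    rw [Finset.card_insert_of_notMem (by
        simp only [Finset.mem_insert, Finset.mem_singleton]
        push_neg
        exact ⟨n23, n24, n25, n26⟩)]
    rw [Finset.card_insert_of_notMem (by
        simp only [Finset.mem_insert, Finset.mem_singleton]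
        push_neg
        exact ⟨n34, n35, n36⟩)]
    rw [Finset.card_insert_of_notMem (by
        simp only [Finset.mem_insert, Finset.mem_singleton]
        push_neg
        exact ⟨n45, n46⟩)]
    rw [Finset.card_insert_of_notMem (by
        simp only [Finset.mem_singleton]
        exact n56)]
    rw [Finset.card_singleton]
  have htr : Nat.card {u : Fin 2 → F // Deg u}
      = Nat.card {x : F × F //
          x.2 ≠ 0 ∧ x.1 ≠ 0 ∧ (x.2^2 - x.1^2) * (x.2^4 - 3*x.2^2*x.1^2 + x.1^4) = 0} :=
    Nat.card_congr (e2s.subtypeEquiv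
      (q := fun x => x.2 ≠ 0 ∧ x.1 ≠ 0 ∧ (x.2^2 - x.1^2) * (x.2^4 - 3*x.2^2*x.1^2 + x.1^4) = 0)
      (fun u => Iff.rfl))
  have htr2 : Nat.card {u : Fin 2 → F // Deg u}
      = ∑ w : F, Nat.card
          {z : F // z ≠ 0 ∧ w ≠ 0 ∧ (z^2 - w^2) * (z^4 - 3*z^2*w^2 + w^4) = 0} := by
    rw [htr]
    exact card_prod_subtype
      (fun w z : F => z ≠ 0 ∧ w ≠ 0 ∧ (z^2 - w^2) * (z^4 - 3*z^2*w^2 + w^4) = 0)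
  rw [htr2, sum_univ_split (0:F) _ 6 (fun w hw => hcard6 w hw)]
  have h0 : Nat.card {z : F //
      z ≠ 0 ∧ (0:F) ≠ 0 ∧ (z^2 - (0:F)^2) * (z^4 - 3*z^2*(0:F)^2 + (0:F)^4) = 0} = 0 := by
    rw [Nat.card_eq_fintype_card]
    exact Fintype.card_eq_zero_iff.mpr ⟨fun x => x.2.2.1 rfl⟩
  rw [h0, zero_add, mul_comm]

lemma card_affine (φ : F) (hφ : φ * φ = φ + 1) (h2 : (2:F) ≠ 0) (h5 : (5:F) ≠ 0) :
    Nat.card {x : (Fin 2 → F) × (Fin 3 → F) // x.2 ≠ 0 ∧ x.1 ≠ 0 ∧ Eq5 x.2 x.1 = 0}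
      = (Fintype.card F ^ 2 + 8 * Fintype.card F + 1)
        * ((Fintype.card F - 1) * (Fintype.card F - 1)) := by
  set q := Fintype.card F with hq
  have hq1 : 1 ≤ q := Fintype.card_pos
  have hsum : Nat.card {x : (Fin 2 → F) × (Fin 3 → F) // x.2 ≠ 0 ∧ x.1 ≠ 0 ∧ Eq5 x.2 x.1 = 0}
      = ∑ u : Fin 2 → F, Nat.card {v : Fin 3 → F // v ≠ 0 ∧ u ≠ 0 ∧ Eq5 v u = 0} :=
    card_prod_subtype (fun (u : Fin 2 → F) (v : Fin 3 → F) => v ≠ 0 ∧ u ≠ 0 ∧ Eq5 v u = 0)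
  have hterm : ∀ u : Fin 2 → F,
      Nat.card {v : Fin 3 → F // v ≠ 0 ∧ u ≠ 0 ∧ Eq5 v u = 0}
        = (if u = 0 then 0 else q^2 - 1) + (if Deg u then q^2 - q else 0) := by
    intro u
    by_cases hu : u = 0
    · rw [if_pos hu, if_neg (fun (hD : Deg u) => hD.1 (by rw [hu]; rfl)), Nat.card_eq_fintype_card,
        Fintype.card_eq_zero_iff.mpr ⟨fun x => x.2.2.1 hu⟩]
    · have hE0 : Eq5 (0 : Fin 3 → F) u = 0 := by
        simp only [Eq5, Pi.zero_apply]
        ring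
      have step1 : Nat.card {v : Fin 3 → F // v ≠ 0 ∧ u ≠ 0 ∧ Eq5 v u = 0}
          = Nat.card {v : Fin 3 → F // v ≠ 0 ∧ Eq5 v u = 0} :=
        Nat.card_congr (Equiv.subtypeEquivRight (fun v => by tauto))
      have step2 : Nat.card {v : Fin 3 → F // v ≠ 0 ∧ Eq5 v u = 0}
          = Nat.card {v : Fin 3 → F // Eq5 v u = 0} - 1 := by
        rw [Nat.card_eq_fintype_card, Nat.card_eq_fintype_card,
          Fintype.card_subtype, Fintype.card_subtype]
        have herase : Finset.univ.filter (fun v : Fin 3 → F => v ≠ 0 ∧ Eq5 v u = 0)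
            = (Finset.univ.filter (fun v : Fin 3 → F => Eq5 v u = 0)).erase 0 := by
          ext v
          simp only [Finset.mem_filter, Finset.mem_univ, true_and, Finset.mem_erase]
        rw [herase, Finset.card_erase_of_mem (by
          simp only [Finset.mem_filter, Finset.mem_univ, true_and]
          exact hE0)]
      rw [step1, step2, card_fiber h2 u hu, if_neg hu, ← hq]
      have ha : q + 1 ≤ 2*q^2 := by nlinarith
      have hb : q ≤ q^2 := by nlinarith
      by_cases hD : Deg u
      · rw [if_pos hD, if_pos hD]
        zify [show q ≤ 2*q^2 by omega, show 1 ≤ 2*q^2 - q by omega,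
          show 1 ≤ q^2 by omega, hb]
        ring
      · rw [if_neg hD, if_neg hD, add_zero]
  rw [hsum, Finset.sum_congr rfl (fun u _ => hterm u), Finset.sum_add_distrib]
  have hfun2 : Fintype.card (Fin 2 → F) = q ^ 2 := by
    rw [Fintype.card_fun]
    simp [hq]
  have hsum1 : ∑ u : Fin 2 → F, (if u = 0 then 0 else q^2 - 1) = (q^2 - 1) * (q^2 - 1) := by
    rw [sum_univ_split (0 : Fin 2 → F) _ (q^2 - 1) (fun x hx => if_neg hx)]
    rw [if_pos rfl, zero_add, hfun2]
  have hsum2 : ∑ u : Fin 2 → F, (if Deg u then q^2 - q else 0) = 6 * (q - 1) * (q^2 - q) := by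
    rw [← Finset.sum_filter]
    rw [Finset.sum_const, smul_eq_mul, ← Fintype.card_subtype, ← Nat.card_eq_fintype_card,
      card_deg φ hφ h2 h5]
  rw [hsum1, hsum2]
  zify [show 1 ≤ q^2 by nlinarith, show q ≤ q^2 by nlinarith, hq1]
  ring

lemma proj_aux {K V : Type*} [DivisionRing K] [AddCommGroup V] [Module K V]
    (P P' : Projectivization K V) (c c' : Kˣ)
    (h : (c : K) • P.rep = (c' : K) • P'.rep) : P = P' ∧ c = c' := by
  have hP : P = P' := by
    conv_lhs => rw [← P.mk_rep]
    conv_rhs => rw [← P'.mk_rep]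
    rw [Projectivization.mk_eq_mk_iff]
    refine ⟨c⁻¹ * c', ?_⟩
    rw [Units.smul_def, Units.val_mul, mul_smul, ← h, ← mul_smul, Units.inv_mul, one_smul]
  refine ⟨hP, Units.ext ?_⟩
  rw [hP] at h
  have hsub : ((c : K) - (c' : K)) • P'.rep = 0 := by
    rw [sub_smul, h, sub_self]
  rcases smul_eq_zero.mp hsub with h0 | h0
  · exact sub_eq_zero.mp h0
  · exact absurd h0 P'.rep_nonzero

lemma eq5_scale (a b : F) (v : Fin 3 → F) (u : Fin 2 → F) :
    Eq5 (a • v) (b • u) = a ^ 2 * b ^ 4 * Eq5 v u := by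
  simp only [Eq5, Pi.smul_apply, smul_eq_mul]
  ring

theorem stmt_19 (p n : ℕ) [Fact p.Prime] (hodd : p ≠ 2) (hn : 0 < n)
    (hleg : legendreSym p 5 = 1)
    (F : Type) [Field F] [Fintype F] (hF : Fintype.card F = p ^ n) :
    Nat.card {PQ : Projectivization F (Fin 3 → F) × Projectivization F (Fin 2 → F) //
      PQ.1.rep 2 ^ 2 * PQ.2.rep 0 ^ 4
        - PQ.1.rep 0 * PQ.1.rep 1 * PQ.2.rep 0 ^ 3 * PQ.2.rep 1
        + (PQ.1.rep 0 ^ 2 + PQ.1.rep 1 ^ 2 - 3 * PQ.1.rep 2 ^ 2) * PQ.2.rep 0 ^ 2 * PQ.2.rep 1 ^ 2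
        - PQ.1.rep 0 * PQ.1.rep 1 * PQ.2.rep 0 * PQ.2.rep 1 ^ 3
        + PQ.1.rep 2 ^ 2 * PQ.2.rep 1 ^ 4 = 0} =
      (p ^ n) ^ 2 + 8 * p ^ n + 1 := by
  have hp : p.Prime := Fact.out
  -- characteristic of F is p
  have hchar : CharP F p := by
    have h1 : CharP F (ringChar F) := ringChar.charP F
    obtain ⟨m, hm_prime, hcard⟩ := FiniteField.card F (ringChar F)
    have hdvd : ringChar F ∣ p ^ n := by
      rw [← hF, hcard]
      exact dvd_pow_self _ m.ne_zero
    have : ringChar F = p :=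
      (Nat.prime_dvd_prime_iff_eq hm_prime hp).mp (hm_prime.dvd_of_dvd_pow hdvd)
    rwa [this] at h1
  have hp5 : p ≠ 5 := by
    intro h
    subst h
    have h0 : legendreSym 5 5 = 0 := by
      rw [legendreSym.eq_zero_iff]
      rw [show ((5:ℤ) : ZMod 5) = ((5:ℕ) : ZMod 5) by push_cast; ring, ZMod.natCast_self]
    rw [h0] at hleg
    exact absurd hleg (by norm_num)
  have h2 : (2 : F) ≠ 0 := by
    intro h
    have := (CharP.cast_eq_zero_iff F p 2).mp (by exact_mod_cast h)
    rcases (Nat.Prime.eq_one_or_self_of_dvd Nat.prime_two p this) with h' | h'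
    · exact hp.one_lt.ne' h'
    · exact hodd h'
  have h5 : (5 : F) ≠ 0 := by
    intro h
    have := (CharP.cast_eq_zero_iff F p 5).mp (by exact_mod_cast h)
    rcases (Nat.Prime.eq_one_or_self_of_dvd (by norm_num) p this) with h' | h'
    · exact hp.one_lt.ne' h'
    · exact hp5 h'
  -- a square root of 5 in F, hence a golden-ratio element
  have hs : ∃ s : F, s * s = 5 := by
    have hne : ((5:ℤ) : ZMod p) ≠ 0 := by
      intro h
      rw [ZMod.intCast_zmod_eq_zero_iff_dvd] at h
      have : p ∣ 5 := by exact_mod_cast h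
      rcases (Nat.Prime.eq_one_or_self_of_dvd (by norm_num) p this) with h' | h'
      · exact hp.one_lt.ne' h'
      · exact hp5 h'
    obtain ⟨t, ht⟩ := (legendreSym.eq_one_iff p hne).mp hleg
    refine ⟨ZMod.castHom (dvd_refl p) F t, ?_⟩
    have := congrArg (ZMod.castHom (dvd_refl p) F) ht
    rw [map_mul] at this
    rw [← this]
    have : ((5:ℤ) : ZMod p) = ((5:ℕ) : ZMod p) := by push_cast; ring
    rw [this, map_natCast]
    norm_num
  obtain ⟨s, hs5⟩ := hs
  have hφ : ((1 + s)/2) * ((1 + s)/2) = (1 + s)/2 + 1 := by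
    field_simp
    linear_combination hs5
  -- transfer to the affine count
  set T := {PQ : Projectivization F (Fin 3 → F) × Projectivization F (Fin 2 → F) //
      PQ.1.rep 2 ^ 2 * PQ.2.rep 0 ^ 4
        - PQ.1.rep 0 * PQ.1.rep 1 * PQ.2.rep 0 ^ 3 * PQ.2.rep 1
        + (PQ.1.rep 0 ^ 2 + PQ.1.rep 1 ^ 2 - 3 * PQ.1.rep 2 ^ 2) * PQ.2.rep 0 ^ 2 * PQ.2.rep 1 ^ 2
        - PQ.1.rep 0 * PQ.1.rep 1 * PQ.2.rep 0 * PQ.2.rep 1 ^ 3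
        + PQ.1.rep 2 ^ 2 * PQ.2.rep 1 ^ 4 = 0} with hT
  let g : T × (Fˣ × Fˣ) → {x : (Fin 2 → F) × (Fin 3 → F) // x.2 ≠ 0 ∧ x.1 ≠ 0 ∧ Eq5 x.2 x.1 = 0} :=
    fun z => ⟨((z.2.2 : F) • z.1.1.2.rep, (z.2.1 : F) • z.1.1.1.rep), by
      refine ⟨smul_ne_zero z.2.1.ne_zero z.1.1.1.rep_nonzero,
        smul_ne_zero z.2.2.ne_zero z.1.1.2.rep_nonzero, ?_⟩
      have hzero : Eq5 z.1.1.1.rep z.1.1.2.rep = 0 := z.1.2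
      rw [eq5_scale, hzero, mul_zero]⟩
  have hgbij : Function.Bijective g := by
    constructor
    · rintro ⟨⟨⟨P, Q⟩, hPQ⟩, ⟨c, d⟩⟩ ⟨⟨⟨P', Q'⟩, hPQ'⟩, ⟨c', d'⟩⟩ heq
      simp only [g, Subtype.mk.injEq, Prod.mk.injEq] at heq
      obtain ⟨hQ, hP⟩ := heq
      obtain ⟨hQQ, hdd⟩ := proj_aux Q Q' d d' hQ
      obtain ⟨hPP, hcc⟩ := proj_aux P P' c c' hP
      exact Prod.ext (Subtype.ext (Prod.ext hPP hQQ)) (Prod.ext hcc hdd)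
    · rintro ⟨⟨u, v⟩, hv, hu, hE⟩
      obtain ⟨c, hc⟩ := Projectivization.exists_smul_eq_mk_rep F v hv
      obtain ⟨d, hd⟩ := Projectivization.exists_smul_eq_mk_rep F u hu
      have hmem : Eq5 (Projectivization.mk F v hv).rep (Projectivization.mk F u hu).rep = 0 := by
        rw [← hc, ← hd, Units.smul_def, Units.smul_def, eq5_scale, hE, mul_zero]
      refine ⟨⟨⟨⟨Projectivization.mk F v hv, Projectivization.mk F u hu⟩, hmem⟩, ⟨c⁻¹, d⁻¹⟩⟩, ?_⟩
      apply Subtype.ext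
      have h1 : ((d⁻¹ : Fˣ) : F) • (Projectivization.mk F u hu).rep = u := by
        rw [← hd, Units.smul_def, smul_smul, Units.inv_mul, one_smul]
      have h2 : ((c⁻¹ : Fˣ) : F) • (Projectivization.mk F v hv).rep = v := by
        rw [← hc, Units.smul_def, smul_smul, Units.inv_mul, one_smul]
      exact Prod.ext h1 h2
  have hcount := Nat.card_eq_of_bijective g hgbij
  rw [Nat.card_prod, Nat.card_prod] at hcount
  rw [card_affine ((1 + s)/2) hφ h2 h5] at hcount
  have hunits : Nat.card Fˣ = p ^ n - 1 := by
    rw [Nat.card_eq_fintype_card, Fintype.card_units, hF]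
  rw [hunits, hF] at hcount
  have hq2 : 2 ≤ p ^ n := le_trans hp.two_le (by
    calc p = p ^ 1 := (pow_one p).symm
    _ ≤ p ^ n := Nat.pow_le_pow_right hp.pos hn)
  have hpos : 0 < (p ^ n - 1) * (p ^ n - 1) := by
    have : 1 ≤ p ^ n - 1 := by omega
    nlinarith
  exact Nat.eq_of_mul_eq_mul_right hpos hcount
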